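/- Let S0 and S1 be nonempty finite subsets of ℝ² in general position. Then S0 and S1 have a separating common tangent if and only if the convex hulls of S0 and S1 are disjoint. -/

import Mathlib

open Pointwise
set_option maxHeartbeats 1000000

/-- Finite sets `S0, S1 ⊆ ℝ²` are in *general position* if they are disjoint
and no three distinct points of `S0 ∪ S1` are collinear. -/
def InGeneralPosition (S0 S1 : Set (ℝ × ℝ)) : Prop :=
  S0 ∩ S1 = ∅ ∧
    ∀ a ∈ S0 ∪ S1, ∀ b ∈ S0 ∪ S1, ∀ c ∈ S0 ∪ S1,
      a ≠ b → a ≠ c → b ≠ c → ¬ Collinear ℝ ({a, b, c} : Set (ℝ × ℝ))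

/-- The line `{x | f x = c}` is a *separating common tangent* of `S0` and `S1`
if it intersects the convex hulls of both sets, `S0` is contained in one
closed half-plane of the line and `S1` is contained in the other. -/
def IsSeparatingCommonTangent (f : ℝ × ℝ →ₗ[ℝ] ℝ) (c : ℝ) (S0 S1 : Set (ℝ × ℝ)) : Prop :=
  ({x | f x = c} ∩ convexHull ℝ S0).Nonempty ∧
  ({x | f x = c} ∩ convexHull ℝ S1).Nonempty ∧
    ((S0 ⊆ {x | f x ≤ c} ∧ S1 ⊆ {x | c ≤ f x}) ∨
      (S0 ⊆ {x | c ≤ f x} ∧ S1 ⊆ {x | f x ≤ c}))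

/-- Any linear functional on `ℝ × ℝ` is determined by its values on the basis. -/
lemma lin_apply (f : ℝ × ℝ →ₗ[ℝ] ℝ) (x : ℝ × ℝ) :
    f x = x.1 * f (1, 0) + x.2 * f (0, 1) := by
  have hx : f x = f (x.1 • ((1 : ℝ), (0 : ℝ)) + x.2 • ((0 : ℝ), (1 : ℝ))) := by
    congr 1
    ext <;> simp
  rw [hx, map_add, map_smul, map_smul, smul_eq_mul, smul_eq_mul]

/-- A subset of a line is collinear. -/
lemma collinear_of_subset_line (f : ℝ × ℝ →ₗ[ℝ] ℝ) (hf : f ≠ 0) (c : ℝ)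
    {s : Set (ℝ × ℝ)} (hs : s ⊆ {x | f x = c}) {a : ℝ × ℝ} (ha : a ∈ s) :
    Collinear ℝ s := by
  set A := f (1, 0) with hA
  set B := f (0, 1) with hB
  have hAB : A ^ 2 + B ^ 2 ≠ 0 := by
    intro h
    apply hf
    have hA0 : A = 0 := by nlinarith [sq_nonneg A, sq_nonneg B]
    have hB0 : B = 0 := by nlinarith [sq_nonneg A, sq_nonneg B]
    apply LinearMap.ext
    intro x
    rw [lin_apply f x, ← hA, ← hB, hA0, hB0]
    simp
  rw [collinear_iff_of_mem ha]
  refine ⟨(-B, A), fun p hp => ?_⟩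
  have hpa : A * (p.1 - a.1) + B * (p.2 - a.2) = 0 := by
    have h1 : f p = c := hs hp
    have h2 : f a = c := hs ha
    rw [lin_apply f p, ← hA, ← hB] at h1
    rw [lin_apply f a, ← hA, ← hB] at h2
    nlinarith
  refine ⟨(A * (p.2 - a.2) - B * (p.1 - a.1)) / (A ^ 2 + B ^ 2), ?_⟩
  have : ((A * (p.2 - a.2) - B * (p.1 - a.1)) / (A ^ 2 + B ^ 2)) • ((-B : ℝ), (A : ℝ))
      = (p.1 - a.1, p.2 - a.2) := by
    ext
    · show ((A * (p.2 - a.2) - B * (p.1 - a.1)) / (A ^ 2 + B ^ 2)) * (-B) = p.1 - a.1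
      field_simp
      linear_combination (-A) * hpa
    · show ((A * (p.2 - a.2) - B * (p.1 - a.1)) / (A ^ 2 + B ^ 2)) * A = p.2 - a.2
      field_simp
      linear_combination (-B) * hpa
  rw [this]
  ext <;> simp

/-- Face lemma: if `S` lies in the halfplane `f ≤ c` and `z ∈ convexHull S` lies
on the boundary line, then `z` is in the convex hull of `S ∩ {f = c}`. -/
lemma mem_convexHull_face (f : ℝ × ℝ →ₗ[ℝ] ℝ) (c : ℝ) {S : Set (ℝ × ℝ)}
    (hS : ∀ x ∈ S, f x ≤ c) {z : ℝ × ℝ} (hz : z ∈ convexHull ℝ S) (hfz : f z = c) :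
    z ∈ convexHull ℝ (S ∩ {x | f x = c}) := by
  rw [convexHull_eq] at hz
  obtain ⟨ι, t, w, p, hw0, hw1, hp, hcm⟩ := hz
  have hfz' : f z = ∑ i ∈ t, w i * f (p i) := by
    rw [← hcm, Finset.centerMass_eq_of_sum_1 _ _ hw1, map_sum]
    simp [smul_eq_mul]
  have key : ∀ i ∈ t, w i ≠ 0 → f (p i) = c := by
    by_contra h
    push_neg at h
    obtain ⟨i0, hi0t, hi0w, hi0⟩ := h
    have hlt : w i0 * f (p i0) < w i0 * c := by
      have h1 : f (p i0) < c := lt_of_le_of_ne (hS _ (hp _ hi0t)) hi0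
      have h2 : 0 < w i0 := lt_of_le_of_ne (hw0 _ hi0t) (Ne.symm hi0w)
      exact mul_lt_mul_of_pos_left h1 h2
    have hsum : ∑ i ∈ t, w i * f (p i) < ∑ i ∈ t, w i * c :=
      Finset.sum_lt_sum
        (fun i hi => mul_le_mul_of_nonneg_left (hS _ (hp _ hi)) (hw0 _ hi))
        ⟨i0, hi0t, hlt⟩
    rw [← Finset.sum_mul, hw1, one_mul] at hsum
    rw [hfz'] at hfz
    linarith
  classical
  have hsub : z = (t.filter (fun i => w i ≠ 0)).centerMass w p := by
    rw [← hcm]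
    exact (Finset.centerMass_filter_ne_zero (t := t) (w := w) (z := p)).symm
  rw [hsub]
  apply Finset.centerMass_mem_convexHull
  · intro i hi
    exact hw0 i (Finset.mem_filter.1 hi).1
  · rw [Finset.sum_filter_ne_zero, hw1]
    norm_num
  · intro i hi
    obtain ⟨hit, hiw⟩ := Finset.mem_filter.1 hi
    exact ⟨hp i hit, key i hit hiw⟩

/-- Face lemma (≥ version). -/
lemma mem_convexHull_face_ge (f : ℝ × ℝ →ₗ[ℝ] ℝ) (c : ℝ) {S : Set (ℝ × ℝ)}
    (hS : ∀ x ∈ S, c ≤ f x) {z : ℝ × ℝ} (hz : z ∈ convexHull ℝ S) (hfz : f z = c) :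
    z ∈ convexHull ℝ (S ∩ {x | f x = c}) := by
  have := mem_convexHull_face (-f) (-c) (S := S)
    (fun x hx => by simpa using hS x hx) hz (by simpa using hfz)
  have hset : S ∩ {x | (-f) x = -c} = S ∩ {x | f x = c} := by
    ext x
    simp
  rwa [hset] at this

/-- Auxiliary: a separating common tangent forces disjoint hulls, using general position. -/
lemma no_common_point (f : ℝ × ℝ →ₗ[ℝ] ℝ) (c : ℝ) (hf : f ≠ 0)
    (S0 S1 : Set (ℝ × ℝ)) (hint : S0 ∩ S1 = ∅)
    (hcol : ∀ a ∈ S0 ∪ S1, ∀ b ∈ S0 ∪ S1, ∀ p ∈ S0 ∪ S1,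
      a ≠ b → a ≠ p → b ≠ p → ¬ Collinear ℝ ({a, b, p} : Set (ℝ × ℝ)))
    (h0 : S0 ⊆ {x | f x ≤ c}) (h1 : S1 ⊆ {x | c ≤ f x})
    {z : ℝ × ℝ} (hz0 : z ∈ convexHull ℝ S0) (hz1 : z ∈ convexHull ℝ S1) : False := by
  have hzle : f z ≤ c :=
    convexHull_min h0 (convex_halfSpace_le f.isLinear c) hz0
  have hzge : c ≤ f z :=
    convexHull_min h1 (convex_halfSpace_ge f.isLinear c) hz1
  have hfz : f z = c := le_antisymm hzle hzge
  have hzA0 : z ∈ convexHull ℝ (S0 ∩ {x | f x = c}) :=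
    mem_convexHull_face f c (fun x hx => h0 hx) hz0 hfz
  have hzA1 : z ∈ convexHull ℝ (S1 ∩ {x | f x = c}) :=
    mem_convexHull_face_ge f c (fun x hx => h1 hx) hz1 hfz
  set A0 := S0 ∩ {x | f x = c} with hA0def
  set A1 := S1 ∩ {x | f x = c} with hA1def
  have hA0ne : A0.Nonempty := by
    by_contra h
    rw [Set.not_nonempty_iff_eq_empty] at h
    rw [h] at hzA0
    simp at hzA0
  have hA1ne : A1.Nonempty := by
    by_contra h
    rw [Set.not_nonempty_iff_eq_empty] at h
    rw [h] at hzA1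
    simp at hzA1
  obtain ⟨a, ha⟩ := hA0ne
  obtain ⟨b, hb⟩ := hA1ne
  have hab : a ≠ b := by
    rintro rfl
    have : a ∈ S0 ∩ S1 := ⟨ha.1, hb.1⟩
    rw [hint] at this
    exact this
  have hA0sub : A0 ⊆ {a} := by
    intro p hp
    by_contra hpa
    simp only [Set.mem_singleton_iff] at hpa
    have hpb : p ≠ b := by
      rintro rfl
      have : p ∈ S0 ∩ S1 := ⟨hp.1, hb.1⟩
      rw [hint] at this
      exact this
    refine hcol a (Or.inl ha.1) b (Or.inr hb.1) p (Or.inl hp.1) hab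
      (Ne.symm hpa) (Ne.symm hpb) ?_
    exact collinear_of_subset_line f hf c
      (by rintro x (rfl | rfl | rfl); exacts [ha.2, hb.2, hp.2])
      (Set.mem_insert a _)
  have hA1sub : A1 ⊆ {b} := by
    intro p hp
    by_contra hpb
    simp only [Set.mem_singleton_iff] at hpb
    have hpa : p ≠ a := by
      rintro rfl
      have : p ∈ S0 ∩ S1 := ⟨ha.1, hp.1⟩
      rw [hint] at this
      exact this
    refine hcol a (Or.inl ha.1) b (Or.inr hb.1) p (Or.inr hp.1) hab
      (Ne.symm hpa) (Ne.symm hpb) ?_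
    exact collinear_of_subset_line f hf c
      (by rintro x (rfl | rfl | rfl); exacts [ha.2, hb.2, hp.2])
      (Set.mem_insert a _)
  have hza : z = a := by
    have := convexHull_mono hA0sub hzA0
    rwa [convexHull_singleton, Set.mem_singleton_iff] at this
  have hzb : z = b := by
    have := convexHull_mono hA1sub hzA1
    rwa [convexHull_singleton, Set.mem_singleton_iff] at this
  exact hab (hza ▸ hzb ▸ rfl)

/-- Existence of a separating common tangent when the hulls are disjoint. -/
lemma exists_tangent (S0 S1 : Set (ℝ × ℝ)) (h0fin : S0.Finite) (h1fin : S1.Finite)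
    (h0ne : S0.Nonempty) (h1ne : S1.Nonempty)
    (hdisj : Disjoint (convexHull ℝ S0) (convexHull ℝ S1)) :
    ∃ (f : ℝ × ℝ →ₗ[ℝ] ℝ) (c : ℝ), f ≠ 0 ∧ IsSeparatingCommonTangent f c S0 S1 := by
  classical
  set K0 := convexHull ℝ S0 with hK0def
  set K1 := convexHull ℝ S1 with hK1def
  have hK0c : IsCompact K0 := h0fin.isCompact_convexHull ℝ
  have hK1c : IsCompact K1 := h1fin.isCompact_convexHull ℝ
  have hK0cv : Convex ℝ K0 := convex_convexHull ℝ S0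
  have hK1cv : Convex ℝ K1 := convex_convexHull ℝ S1
  have hK0ne : K0.Nonempty := h0ne.mono (subset_convexHull ℝ S0)
  have hK1ne : K1.Nonempty := h1ne.mono (subset_convexHull ℝ S1)
  set D : Set (ℝ × ℝ) := K1 - K0 with hDdef
  have hDc : IsCompact D := by
    have himg : D = (fun p : (ℝ × ℝ) × (ℝ × ℝ) => p.1 - p.2) '' (K1 ×ˢ K0) := by
      rw [hDdef, ← Set.image2_sub, ← Set.image_prod]
    rw [himg]
    exact (hK1c.prod hK0c).image (continuous_fst.sub continuous_snd)
  have hDcv : Convex ℝ D := hK1cv.sub hK0cv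
  have hDne : D.Nonempty := hK1ne.sub hK0ne
  have h0D : (0 : ℝ × ℝ) ∉ D := by
    intro h
    obtain ⟨y, hy, x, hx, hxy⟩ := Set.mem_sub.1 h
    have : y = x := by
      have := sub_eq_zero.1 hxy
      exact this
    exact Set.disjoint_left.1 hdisj (this ▸ hx) hy
  obtain ⟨g, u, hgu0, hgu⟩ := geometric_hahn_banach_point_closed hDcv hDc.isClosed h0D
  have hu0 : 0 < u := by simpa using hgu0
  have hgpos : ∀ d ∈ D, 0 < g d := fun d hd => lt_trans hu0 (hgu d hd)
  set A := g ((1 : ℝ), (0 : ℝ)) with hA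
  set B := g ((0 : ℝ), (1 : ℝ)) with hB
  set G : ℝ × ℝ →ₗ[ℝ] ℝ :=
    A • (LinearMap.snd ℝ ℝ ℝ) - B • (LinearMap.fst ℝ ℝ ℝ) with hGdef
  have hGapp : ∀ x : ℝ × ℝ, G x = A * x.2 - B * x.1 := by
    intro x; simp [hGdef, smul_eq_mul]
  have hgapp : ∀ x : ℝ × ℝ, g x = x.1 * A + x.2 * B := fun x =>
    lin_apply g.toLinearMap x
  -- slope function
  set s : ℝ × ℝ → ℝ := fun d => G d / g d with hsdef
  have hscont : ContinuousOn s D := by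
    apply ContinuousOn.div
    · exact (LinearMap.continuous_of_finiteDimensional G).continuousOn
    · exact g.continuous.continuousOn
    · exact fun d hd => ne_of_gt (hgpos d hd)
  obtain ⟨dstar, hdD, hdmax⟩ := hDc.exists_isMaxOn hDne hscont
  set sstar : ℝ := s dstar with hsstar
  have hFkey : ∀ d ∈ D, G d ≤ sstar * g d := by
    intro d hd
    have h1 : s d ≤ sstar := hdmax hd
    have h2 : 0 < g d := hgpos d hd
    have h3 : G d / g d ≤ sstar := h1
    calc G d = (G d / g d) * g d := by field_simp
    _ ≤ sstar * g d := mul_le_mul_of_nonneg_right h3 h2.le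
  have hFstar : G dstar = sstar * g dstar := by
    have h2 : g dstar ≠ 0 := ne_of_gt (hgpos dstar hdD)
    rw [hsstar, hsdef]
    field_simp
  set F : ℝ × ℝ →ₗ[ℝ] ℝ := sstar • (g : ℝ × ℝ →ₗ[ℝ] ℝ) - G with hFdef
  have hFapp : ∀ x : ℝ × ℝ, F x = sstar * g x - G x := by
    intro x; simp [hFdef, smul_eq_mul]
  have hFnonneg : ∀ d ∈ D, 0 ≤ F d := by
    intro d hd
    rw [hFapp]
    linarith [hFkey d hd]
  have hFdstar : F dstar = 0 := by
    rw [hFapp]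
    linarith [hFstar]
  have hABne : A ^ 2 + B ^ 2 ≠ 0 := by
    intro h
    obtain ⟨d, hd⟩ := hDne
    have hA0 : A = 0 := by nlinarith [sq_nonneg A, sq_nonneg B]
    have hB0 : B = 0 := by nlinarith [sq_nonneg A, sq_nonneg B]
    have : g d = 0 := by rw [hgapp d, hA0, hB0]; ring
    linarith [hgpos d hd]
  have hFne : F ≠ 0 := by
    intro h
    have h1 : F ((-B : ℝ), (A : ℝ)) = 0 := by rw [h]; simp
    rw [hFapp, hgapp ((-B : ℝ), (A : ℝ)), hGapp ((-B : ℝ), (A : ℝ))] at h1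
    simp only at h1
    apply hABne
    nlinarith [h1]
  -- extract the witnesses
  obtain ⟨ystar, hy, xstar, hx, hxy⟩ := Set.mem_sub.1 hdD
  set c : ℝ := F xstar with hcdef
  have hFy : F ystar = c := by
    have : F ystar - F xstar = F dstar := by rw [← hxy]; simp
    rw [hFdstar] at this
    linarith [this]
  refine ⟨F, c, hFne, ⟨xstar, rfl, hx⟩, ⟨ystar, hFy, hy⟩, Or.inl ⟨?_, ?_⟩⟩
  · intro x hxS
    have hxK : x ∈ K0 := subset_convexHull ℝ S0 hxS
    have hmem : ystar - x ∈ D := Set.sub_mem_sub hy hxK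
    have := hFnonneg _ hmem
    rw [map_sub] at this
    simp only [Set.mem_setOf_eq]
    rw [← hFy] at *
    linarith
  · intro y hyS
    have hyK : y ∈ K1 := subset_convexHull ℝ S1 hyS
    have hmem : y - xstar ∈ D := Set.sub_mem_sub hyK hx
    have := hFnonneg _ hmem
    rw [map_sub] at this
    simp only [Set.mem_setOf_eq]
    linarith

/-- Nonempty finite sets `S0` and `S1` in general position have a separating
common tangent if and only if their convex hulls are disjoint. -/
theorem separatingCommonTangent_iff_hulls_disjoint (S0 S1 : Set (ℝ × ℝ))
    (h0fin : S0.Finite) (h1fin : S1.Finite)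
    (h0ne : S0.Nonempty) (h1ne : S1.Nonempty)
    (hgen : InGeneralPosition S0 S1) :
    (∃ (f : ℝ × ℝ →ₗ[ℝ] ℝ) (c : ℝ), f ≠ 0 ∧ IsSeparatingCommonTangent f c S0 S1) ↔
      Disjoint (convexHull ℝ S0) (convexHull ℝ S1) := by
  obtain ⟨hint, hcol⟩ := hgen
  constructor
  · rintro ⟨f, c, hf, _, _, hsep⟩
    rw [Set.disjoint_left]
    intro z hz0 hz1
    rcases hsep with ⟨h0, h1⟩ | ⟨h0, h1⟩
    · exact no_common_point f c hf S0 S1 hint hcol h0 h1 hz0 hz1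
    · refine no_common_point f c hf S1 S0 ?_ ?_ h1 h0 hz1 hz0
      · rw [Set.inter_comm]; exact hint
      · intro a ha b hb p hp
        rw [Set.union_comm] at ha hb hp
        exact hcol a ha b hb p hp
  · exact exists_tangent S0 S1 h0fin h1fin h0ne h1ne
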